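/- Let v₀,…,v₅ be a basis of ℂ⁶ and set Λ₁=⟨v₀,v₁,v₂⟩, Λ₂=⟨v₂,v₃,v₄⟩, Λ₃=⟨v₀,v₄,v₅⟩. A 2-dimensional subspace L of ℂ⁶ satisfies L ∩ Λᵢ ≠ {0} for i = 1,2,3 if and only if one of the following holds: (a) L ⊂ ⟨v₀,v₂,v₄⟩; (b) v₀ ∈ L and L ⊂ ⟨v₀⟩ + ⟨v₂,v₃,v₄⟩; (c) v₂ ∈ L and L ⊂ ⟨v₂⟩ + ⟨v₀,v₄,v₅⟩; (d) v₄ ∈ L and L ⊂ ⟨v₄⟩ + ⟨v₀,v₁,v₂⟩. -/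

import Mathlib

open Module Submodule

private lemma aux_meet (L M W : Submodule ℂ (Fin 6 → ℂ)) (hLW : L ≤ W) (hMW : M ≤ W)
    (h : finrank ℂ W < finrank ℂ L + finrank ℂ M) : L ⊓ M ≠ ⊥ := by
  intro hbot
  have h1 := Submodule.finrank_sup_add_finrank_inf_eq L M
  rw [hbot, finrank_bot] at h1
  have h2 : finrank ℂ ↥(L ⊔ M) ≤ finrank ℂ W := Submodule.finrank_mono (sup_le hLW hMW)
  omega

private lemma aux_rank3 (v : Fin 6 → (Fin 6 → ℂ)) (hv : LinearIndependent ℂ v)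
    (i j k : Fin 6) (hij : i ≠ j) (hik : i ≠ k) (hjk : j ≠ k) :
    finrank ℂ (span ℂ ({v i, v j, v k} : Set (Fin 6 → ℂ))) = 3 := by
  have hind : LinearIndependent ℂ ![v i, v j, v k] := by
    have he : ![v i, v j, v k] = v ∘ ![i, j, k] := by
      ext m p; fin_cases m <;> rfl
    rw [he]
    apply hv.comp
    intro a c hac
    fin_cases a <;> fin_cases c <;> simp_all
  have hr := finrank_span_eq_card hind
  have hrange : Set.range ![v i, v j, v k] = {v i, v j, v k} := by
    ext a; simp [Matrix.range_cons, Matrix.range_empty]; tauto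
  rw [hrange] at hr
  simpa using hr

private lemma aux_rank2 (v : Fin 6 → (Fin 6 → ℂ)) (hv : LinearIndependent ℂ v)
    (i j : Fin 6) (hij : i ≠ j) :
    finrank ℂ (span ℂ ({v i, v j} : Set (Fin 6 → ℂ))) = 2 := by
  have hind : LinearIndependent ℂ ![v i, v j] := by
    have he : ![v i, v j] = v ∘ ![i, j] := by
      ext m p; fin_cases m <;> rfl
    rw [he]
    apply hv.comp
    intro a c hac
    fin_cases a <;> fin_cases c <;> simp_all
  have hr := finrank_span_eq_card hind
  have hrange : Set.range ![v i, v j] = {v i, v j} := by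
    ext a; simp [Matrix.range_cons, Matrix.range_empty]; tauto
  rw [hrange] at hr
  simpa using hr

private lemma aux_rank4 (v : Fin 6 → (Fin 6 → ℂ)) (hv : LinearIndependent ℂ v)
    (i j k l : Fin 6) (hij : i ≠ j) (hik : i ≠ k) (hil : i ≠ l) (hjk : j ≠ k)
    (hjl : j ≠ l) (hkl : k ≠ l) :
    finrank ℂ (span ℂ ({v i, v j, v k, v l} : Set (Fin 6 → ℂ))) = 4 := by
  have hind : LinearIndependent ℂ ![v i, v j, v k, v l] := by
    have he : ![v i, v j, v k, v l] = v ∘ ![i, j, k, l] := by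
      ext m p; fin_cases m <;> rfl
    rw [he]
    apply hv.comp
    intro a c hac
    fin_cases a <;> fin_cases c <;> simp_all
  have hr := finrank_span_eq_card hind
  have hrange : Set.range ![v i, v j, v k, v l] = {v i, v j, v k, v l} := by
    ext a; simp [Matrix.range_cons, Matrix.range_empty]; tauto
  rw [hrange] at hr
  simpa using hr


/-- **O'Grady, equation (1.6).** Let `v₀, …, v₅` be a basis of `ℂ⁶` and set `Λ₁=⟨v₀,v₁,v₂⟩`,
`Λ₂=⟨v₂,v₃,v₄⟩`, `Λ₃=⟨v₀,v₄,v₅⟩`. A 2-dimensional subspace `L` of `ℂ⁶` meets `Λ₁, Λ₂, Λ₃`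
nontrivially if and only if one of the following holds:
(a) `L ⊆ ⟨v₀,v₂,v₄⟩`; (b) `v₀ ∈ L` and `L ⊆ ⟨v₀⟩ + ⟨v₂,v₃,v₄⟩`;
(c) `v₂ ∈ L` and `L ⊆ ⟨v₂⟩ + ⟨v₀,v₄,v₅⟩`; (d) `v₄ ∈ L` and `L ⊆ ⟨v₄⟩ + ⟨v₀,v₁,v₂⟩`. -/
theorem lines_meeting_three_planes
    (v : Fin 6 → (Fin 6 → ℂ)) (hv : LinearIndependent ℂ v)
    (hv' : span ℂ (Set.range v) = ⊤)
    (L : Submodule ℂ (Fin 6 → ℂ)) (hL : finrank ℂ L = 2) :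
    ((L ⊓ span ℂ {v 0, v 1, v 2} ≠ ⊥) ∧ (L ⊓ span ℂ {v 2, v 3, v 4} ≠ ⊥) ∧
     (L ⊓ span ℂ {v 0, v 4, v 5} ≠ ⊥)) ↔
    (L ≤ span ℂ {v 0, v 2, v 4} ∨
     (v 0 ∈ L ∧ L ≤ span ℂ {v 0} ⊔ span ℂ {v 2, v 3, v 4}) ∨
     (v 2 ∈ L ∧ L ≤ span ℂ {v 2} ⊔ span ℂ {v 0, v 4, v 5}) ∨
     (v 4 ∈ L ∧ L ≤ span ℂ {v 4} ⊔ span ℂ {v 0, v 1, v 2})) := by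
  constructor
  · rintro ⟨h1, h2, h3⟩
    classical
    let b : Basis (Fin 6) ℂ (Fin 6 → ℂ) := Basis.mk hv (le_of_eq hv'.symm)
    have hb : ⇑b = v := Basis.coe_mk hv _
    have key : ∀ (i j k : Fin 6) (x : Fin 6 → ℂ), x ∈ span ℂ ({v i, v j, v k} : Set (Fin 6 → ℂ)) ↔
        ∀ m, m ≠ i → m ≠ j → m ≠ k → b.repr x m = 0 := by
      intro i j k x
      have him : ({v i, v j, v k} : Set (Fin 6 → ℂ)) = ⇑b '' {i, j, k} := by
        simp [hb, Set.image_insert_eq]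
      rw [him, Basis.mem_span_image]
      constructor
      · intro h m hmi hmj hmk
        by_contra hne
        have hm : m ∈ ((b.repr x).support : Set (Fin 6)) := by
          simpa [Finsupp.mem_support_iff] using hne
        have := h hm
        simp only [Set.mem_insert_iff, Set.mem_singleton_iff] at this
        tauto
      · intro h m hm
        simp only [Finset.mem_coe, Finsupp.mem_support_iff] at hm
        simp only [Set.mem_insert_iff, Set.mem_singleton_iff]
        by_contra hc; push_neg at hc
        exact hm (h m hc.1 hc.2.1 hc.2.2)
    have key1 : ∀ (i : Fin 6) (x : Fin 6 → ℂ), x ∈ span ℂ ({v i} : Set (Fin 6 → ℂ)) ↔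
        ∀ m, m ≠ i → b.repr x m = 0 := by
      intro i x
      have him : ({v i} : Set (Fin 6 → ℂ)) = ⇑b '' {i} := by simp [hb]
      rw [him, Basis.mem_span_image]
      constructor
      · intro h m hmi
        by_contra hne
        have hm : m ∈ ((b.repr x).support : Set (Fin 6)) := by
          simpa [Finsupp.mem_support_iff] using hne
        have := h hm
        simp only [Set.mem_singleton_iff] at this
        exact hmi this
      · intro h m hm
        simp only [Finset.mem_coe, Finsupp.mem_support_iff] at hm
        simp only [Set.mem_singleton_iff]
        by_contra hc
        exact hm (h m hc)
    have hzero : ∀ w : Fin 6 → ℂ, (∀ m, b.repr w m = 0) → w = 0 := by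
      intro w h
      have hr : b.repr w = 0 := Finsupp.ext h
      simpa using b.repr.map_eq_zero_iff.1 hr
    have hsingle : ∀ (i : Fin 6) (w : Fin 6 → ℂ), w ∈ L → w ≠ 0 →
        (∀ m, m ≠ i → b.repr w m = 0) → v i ∈ L ∧ w ∈ span ℂ ({v i} : Set (Fin 6 → ℂ)) := by
      intro i w hwL hw0 hsupp
      have hw : w ∈ span ℂ ({v i} : Set (Fin 6 → ℂ)) := (key1 i w).2 hsupp
      obtain ⟨c, hc⟩ := mem_span_singleton.1 hw
      have hc0 : c ≠ 0 := by rintro rfl; rw [zero_smul] at hc; exact hw0 hc.symm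
      refine ⟨?_, hw⟩
      have hvi : v i = c⁻¹ • w := by rw [← hc, smul_smul, inv_mul_cancel₀ hc0, one_smul]
      rw [hvi]; exact L.smul_mem _ hwL
    have spanpair : ∀ w u : Fin 6 → ℂ, w ∈ L → u ∈ L → u ≠ 0 → (∀ a : ℂ, a • u ≠ w) →
        L = span ℂ {w, u} := by
      intro w u hw hu hu0 hind
      have hli : LinearIndependent ℂ ![w, u] := linearIndependent_fin2.2 ⟨hu0, hind⟩
      have hle : span ℂ ({w, u} : Set (Fin 6 → ℂ)) ≤ L := span_le.2 (by rintro a (rfl | rfl) <;> assumption)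
      have hr : finrank ℂ (span ℂ ({w, u} : Set (Fin 6 → ℂ))) = 2 := by
        have hr := finrank_span_eq_card hli
        have hrange : Set.range ![w, u] = {w, u} := by
          ext a; simp [Matrix.range_cons, Matrix.range_empty]; tauto
        rw [hrange] at hr; simpa using hr
      exact (Submodule.eq_of_le_of_finrank_le hle (by rw [hr, hL])).symm
    obtain ⟨x, hx, hx0⟩ := (Submodule.ne_bot_iff _).1 h1
    obtain ⟨hxL, hxP⟩ := Submodule.mem_inf.1 hx
    obtain ⟨y, hy, hy0⟩ := (Submodule.ne_bot_iff _).1 h2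
    obtain ⟨hyL, hyP⟩ := Submodule.mem_inf.1 hy
    obtain ⟨z, hz, hz0⟩ := (Submodule.ne_bot_iff _).1 h3
    obtain ⟨hzL, hzP⟩ := Submodule.mem_inf.1 hz
    have kx := (key 0 1 2 x).1 hxP
    have ky := (key 2 3 4 y).1 hyP
    by_cases hcase : ∃ c : ℂ, z = c • y
    · -- z parallel to y : case (d)
      obtain ⟨c, rfl⟩ := hcase
      have kz := (key 0 4 5 (c • y)).1 hzP
      have hc0 : c ≠ 0 := by rintro rfl; rw [zero_smul] at hz0; exact hz0 rfl
      have hy4 : ∀ m, m ≠ 4 → b.repr y m = 0 := by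
        intro m hm
        by_cases h0 : m = 0
        · subst h0; exact ky 0 (by decide) (by decide) (by decide)
        by_cases h5 : m = 5
        · subst h5; exact ky 5 (by decide) (by decide) (by decide)
        have := kz m h0 hm h5
        rw [map_smul, Finsupp.smul_apply, smul_eq_mul] at this
        exact (mul_eq_zero.1 this).resolve_left hc0
      obtain ⟨hv4L, _⟩ := hsingle 4 y hyL hy0 hy4
      have hx4 : b.repr x 4 = 0 := kx 4 (by decide) (by decide) (by decide)
      have hxv4 : ∀ a : ℂ, a • v 4 ≠ x := by
        intro a ha
        apply hx0
        apply hzero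
        intro m
        by_cases hm : m = 4
        · subst hm; exact hx4
        · rw [← ha, map_smul, Finsupp.smul_apply, smul_eq_mul]
          have hrv : b.repr (v 4) m = 0 := by
            rw [← hb, Basis.repr_self]
            exact Finsupp.single_eq_of_ne' (fun h => hm h.symm)
          rw [hrv, mul_zero]
      have hLs := spanpair x (v 4) hxL hv4L (hv.ne_zero 4) hxv4
      right; right; right
      refine ⟨hv4L, ?_⟩
      rw [hLs]
      refine span_le.2 ?_
      rintro a (rfl | rfl)
      · exact Submodule.mem_sup_right hxP
      · exact Submodule.mem_sup_left (mem_span_singleton_self _)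
    · push_neg at hcase
      have kz := (key 0 4 5 z).1 hzP
      have hLzy := spanpair z y hzL hyL hy0 (fun a ha => hcase a ha.symm)
      have hxm : x ∈ span ℂ ({z, y} : Set (Fin 6 → ℂ)) := hLzy ▸ hxL
      obtain ⟨α, β, hx_eq⟩ := mem_span_pair.1 hxm
      have coord : ∀ m, α * b.repr z m + β * b.repr y m = b.repr x m := by
        intro m
        rw [← hx_eq, map_add, map_smul, map_smul]
        simp
      by_cases hα : α = 0
      · -- x = β • y : case (c)
        have hy2 : ∀ m, m ≠ 2 → b.repr y m = 0 := by
          intro m hm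
          by_cases h0 : m = 0
          · subst h0; exact ky 0 (by decide) (by decide) (by decide)
          by_cases h1' : m = 1
          · subst h1'; exact ky 1 (by decide) (by decide) (by decide)
          by_cases h5 : m = 5
          · subst h5; exact ky 5 (by decide) (by decide) (by decide)
          -- m ∈ {3, 4} : use coord
          have hβ : β ≠ 0 := by
            rintro rfl
            subst hα
            rw [zero_smul, zero_smul, zero_add] at hx_eq
            exact hx0 hx_eq.symm
          have hxm0 : b.repr x m = 0 := kx m h0 h1' hm
          have := coord m
          rw [hα, zero_mul, zero_add, hxm0] at this
          exact (mul_eq_zero.1 this).resolve_left hβ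
        obtain ⟨hv2L, hyspan⟩ := hsingle 2 y hyL hy0 hy2
        right; right; left
        refine ⟨hv2L, ?_⟩
        rw [hLzy]
        refine span_le.2 ?_
        rintro a (rfl | rfl)
        · exact Submodule.mem_sup_right hzP
        · exact Submodule.mem_sup_left hyspan
      · have hz5 : b.repr z 5 = 0 := by
          have := coord 5
          rw [ky 5 (by decide) (by decide) (by decide), kx 5 (by decide) (by decide) (by decide),
            mul_zero, add_zero] at this
          exact (mul_eq_zero.1 this).resolve_left hα
        by_cases hβ : β = 0
        · -- x = α • z : case (b)
          have hzm : ∀ m, m ≠ 0 → b.repr z m = 0 := by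
            intro m hm
            by_cases h1' : m = 1
            · subst h1'; exact kz 1 (by decide) (by decide) (by decide)
            by_cases h2' : m = 2
            · subst h2'; exact kz 2 (by decide) (by decide) (by decide)
            by_cases h3' : m = 3
            · subst h3'; exact kz 3 (by decide) (by decide) (by decide)
            by_cases h5 : m = 5
            · subst h5; exact hz5
            -- m = 4
            have hxm0 : b.repr x m = 0 := kx m hm h1' h2'
            have := coord m
            rw [hβ, zero_mul, add_zero, hxm0] at this
            exact (mul_eq_zero.1 this).resolve_left hα
          obtain ⟨hv0L, hzspan⟩ := hsingle 0 z hzL hz0 hzm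
          right; left
          refine ⟨hv0L, ?_⟩
          rw [hLzy]
          refine span_le.2 ?_
          rintro a (rfl | rfl)
          · exact Submodule.mem_sup_left hzspan
          · exact Submodule.mem_sup_right hyP
        · -- case (a)
          have hy3 : b.repr y 3 = 0 := by
            have := coord 3
            rw [kz 3 (by decide) (by decide) (by decide), kx 3 (by decide) (by decide) (by decide),
              mul_zero, zero_add] at this
            exact (mul_eq_zero.1 this).resolve_left hβ
          left
          rw [hLzy]
          refine span_le.2 ?_
          rintro a (rfl | rfl)
          · refine (key 0 2 4 _).2 ?_
            intro m h0 _ h4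
            by_cases h5 : m = 5
            · subst h5; exact hz5
            · exact kz m h0 h4 h5
          · refine (key 0 2 4 _).2 ?_
            intro m _ h2' h4
            by_cases h3' : m = 3
            · subst h3'; exact hy3
            · exact ky m h2' h3' h4
  · intro H
    have hvne : ∀ i : Fin 6, v i ≠ 0 := fun i => hv.ne_zero i
    -- helper: if v i ∈ L and v i ∈ M then L ⊓ M ≠ ⊥
    have hmem : ∀ (i : Fin 6) (M : Submodule ℂ (Fin 6 → ℂ)), v i ∈ L → v i ∈ M →
        L ⊓ M ≠ ⊥ := by
      intro i M h1 h2
      exact Submodule.ne_bot_iff _ |>.2 ⟨v i, Submodule.mem_inf.2 ⟨h1, h2⟩, hvne i⟩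
    -- helper: monotone ne_bot
    have hmono : ∀ (M M' : Submodule ℂ (Fin 6 → ℂ)), M ≤ M' → L ⊓ M ≠ ⊥ → L ⊓ M' ≠ ⊥ := by
      intro M M' hle h hbot
      exact h (le_bot_iff.1 ((inf_le_inf_left L hle).trans hbot.le))
    have hsub : ∀ (i j k : Fin 6), v i ∈ span ℂ ({v i, v j, v k} : Set (Fin 6 → ℂ)) :=
      fun i j k => subset_span (by simp)
    have hsub2 : ∀ (i j k : Fin 6), v j ∈ span ℂ ({v i, v j, v k} : Set (Fin 6 → ℂ)) :=
      fun i j k => subset_span (by simp)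
    have hsub3 : ∀ (i j k : Fin 6), v k ∈ span ℂ ({v i, v j, v k} : Set (Fin 6 → ℂ)) :=
      fun i j k => subset_span (by simp)
    rcases H with hW | ⟨h0, hW⟩ | ⟨h2, hW⟩ | ⟨h4, hW⟩
    · -- L ≤ span {v0, v2, v4}
      have hr3 := aux_rank3 v hv 0 2 4 (by decide) (by decide) (by decide)
      refine ⟨?_, ?_, ?_⟩
      · refine hmono (span ℂ {v 0, v 2}) _ (span_le.2 ?_) (aux_meet L _ _ hW (span_le.2 ?_)
          (by rw [hL, aux_rank2 v hv 0 2 (by decide), hr3]; norm_num))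
        · rintro a (rfl | rfl)
          · exact hsub 0 1 2
          · exact hsub3 0 1 2
        · rintro a (rfl | rfl)
          · exact hsub 0 2 4
          · exact hsub2 0 2 4
      · refine hmono (span ℂ {v 2, v 4}) _ (span_le.2 ?_) (aux_meet L _ _ hW (span_le.2 ?_)
          (by rw [hL, aux_rank2 v hv 2 4 (by decide), hr3]; norm_num))
        · rintro a (rfl | rfl)
          · exact hsub 2 3 4
          · exact hsub3 2 3 4
        · rintro a (rfl | rfl)
          · exact hsub2 0 2 4
          · exact hsub3 0 2 4
      · refine hmono (span ℂ {v 0, v 4}) _ (span_le.2 ?_) (aux_meet L _ _ hW (span_le.2 ?_)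
          (by rw [hL, aux_rank2 v hv 0 4 (by decide), hr3]; norm_num))
        · rintro a (rfl | rfl)
          · exact hsub 0 4 5
          · exact hsub2 0 4 5
        · rintro a (rfl | rfl)
          · exact hsub 0 2 4
          · exact hsub3 0 2 4
    · -- v0 ∈ L, L ≤ span{v0} ⊔ Λ₂
      have hWeq : span ℂ ({v 0} : Set (Fin 6 → ℂ)) ⊔ span ℂ {v 2, v 3, v 4}
          = span ℂ {v 0, v 2, v 3, v 4} := by
        rw [← span_union, Set.singleton_union]
      refine ⟨hmem 0 _ h0 (hsub 0 1 2), ?_, hmem 0 _ h0 (hsub 0 4 5)⟩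
      refine aux_meet L _ (span ℂ {v 0, v 2, v 3, v 4}) (hWeq ▸ hW) ?_ ?_
      · exact span_mono (by intro a ha; simp at ha ⊢; tauto)
      · rw [hL, aux_rank3 v hv 2 3 4 (by decide) (by decide) (by decide),
          aux_rank4 v hv 0 2 3 4 (by decide) (by decide) (by decide) (by decide) (by decide) (by decide)]
        norm_num
    · have hWeq : span ℂ ({v 2} : Set (Fin 6 → ℂ)) ⊔ span ℂ {v 0, v 4, v 5}
          = span ℂ {v 2, v 0, v 4, v 5} := by
        rw [← span_union, Set.singleton_union]
      refine ⟨hmem 2 _ h2 (hsub3 0 1 2), hmem 2 _ h2 (hsub 2 3 4), ?_⟩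
      refine aux_meet L _ (span ℂ {v 2, v 0, v 4, v 5}) (hWeq ▸ hW) ?_ ?_
      · exact span_mono (by intro a ha; simp at ha ⊢; tauto)
      · rw [hL, aux_rank3 v hv 0 4 5 (by decide) (by decide) (by decide),
          aux_rank4 v hv 2 0 4 5 (by decide) (by decide) (by decide) (by decide) (by decide) (by decide)]
        norm_num
    · have hWeq : span ℂ ({v 4} : Set (Fin 6 → ℂ)) ⊔ span ℂ {v 0, v 1, v 2}
          = span ℂ {v 4, v 0, v 1, v 2} := by
        rw [← span_union, Set.singleton_union]
      refine ⟨?_, hmem 4 _ h4 (hsub3 2 3 4), hmem 4 _ h4 (hsub2 0 4 5)⟩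
      refine aux_meet L _ (span ℂ {v 4, v 0, v 1, v 2}) (hWeq ▸ hW) ?_ ?_
      · exact span_mono (by intro a ha; simp at ha ⊢; tauto)
      · rw [hL, aux_rank3 v hv 0 1 2 (by decide) (by decide) (by decide),
          aux_rank4 v hv 4 0 1 2 (by decide) (by decide) (by decide) (by decide) (by decide) (by decide)]
        norm_num
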